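/- Let X, W be Banach lattices and T : X → W a linear operator preserving finite suprema (T(a ∨ b) = Ta ∨ Tb). Then for every n and x₁,...,xₙ ∈ X, the Krivine functional calculus satisfies T ∘ τ_{(x₁,...,xₙ)} = τ_{(Tx₁,...,Txₙ)} as maps H_n → W. -/

import Mathlib

open Filter Topology

/-- `h : ℝⁿ → ℝ` is positively homogeneous of degree 1. -/
def PosHomog {n : ℕ} (h : (Fin n → ℝ) → ℝ) : Prop :=
  ∀ l : ℝ, 0 ≤ l → ∀ t, h (l • t) = l * h t

/-- Membership in `H_n`: continuous and positively homogeneous of degree 1. -/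
def InHn {n : ℕ} (h : (Fin n → ℝ) → ℝ) : Prop := Continuous h ∧ PosHomog h

/-- The norm of `H_n`: supremum of `|h|` over the unit sphere of the sup norm on `ℝⁿ`. -/
noncomputable def HnNorm {n : ℕ} (h : (Fin n → ℝ) → ℝ) : ℝ :=
  ⨆ t : {t : Fin n → ℝ // ‖t‖ = 1}, |h t.1|

/-- `τ` is the Krivine functional calculus operator associated to `x ∈ Xⁿ`:
a linear map on `H_n` preserving finite suprema sending the `j`-th coordinate
projection to `x j`. -/
def IsKrivine {X : Type*} [NormedAddCommGroup X] [Lattice X] [IsOrderedAddMonoid X]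
    [HasSolidNorm X] [NormedSpace ℝ X]
    {n : ℕ} (x : Fin n → X) (τ : ((Fin n → ℝ) → ℝ) → X) : Prop :=
  (∀ h g, InHn h → InHn g → τ (h + g) = τ h + τ g) ∧
  (∀ (c : ℝ) h, InHn h → τ (c • h) = c • τ h) ∧
  (∀ h g, InHn h → InHn g → τ (h ⊔ g) = τ h ⊔ τ g) ∧
  (∀ j, τ (fun t => t j) = x j)

/-! ### Auxiliary machinery -/

/-- The sublattice-subspace of functions generated by the coordinate projections. -/
inductive LatSpan (n : ℕ) : ((Fin n → ℝ) → ℝ) → Prop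
  | proj (j : Fin n) : LatSpan n (fun t => t j)
  | add {f g} : LatSpan n f → LatSpan n g → LatSpan n (f + g)
  | smul (c : ℝ) {f} : LatSpan n f → LatSpan n (c • f)
  | sup {f g} : LatSpan n f → LatSpan n g → LatSpan n (f ⊔ g)

section InHnLemmas

variable {n : ℕ} {f g : (Fin n → ℝ) → ℝ}

lemma inHn_proj (j : Fin n) : InHn (fun t : Fin n → ℝ => t j) :=
  ⟨continuous_apply j, fun l _ t => by simp⟩

lemma InHn.add (hf : InHn f) (hg : InHn g) : InHn (f + g) :=
  ⟨hf.1.add hg.1, fun l hl t => by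
    simp only [Pi.add_apply, hf.2 l hl, hg.2 l hl]; ring⟩

lemma InHn.smul (c : ℝ) (hf : InHn f) : InHn (c • f) :=
  ⟨hf.1.const_smul c, fun l hl t => by
    simp only [Pi.smul_apply, smul_eq_mul, hf.2 l hl]; ring⟩

lemma InHn.sup (hf : InHn f) (hg : InHn g) : InHn (f ⊔ g) := by
  refine ⟨?_, fun l hl t => ?_⟩
  · show Continuous fun t => f t ⊔ g t
    exact hf.1.max hg.1
  · simp only [Pi.sup_apply, hf.2 l hl, hg.2 l hl]
    exact (mul_max_of_nonneg _ _ hl).symm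

lemma InHn.zero_apply (hf : InHn f) : f 0 = 0 := by
  have := hf.2 0 le_rfl 0
  simpa using this

lemma latSpan_inHn (hf : LatSpan n f) : InHn f := by
  induction hf with
  | proj j => exact inHn_proj j
  | add _ _ ihf ihg => exact ihf.add ihg
  | smul c _ ih => exact ih.smul c
  | sup _ _ ihf ihg => exact ihf.sup ihg

lemma latSpan_inf (hf : LatSpan n f) (hg : LatSpan n g) : LatSpan n (f ⊓ g) := by
  have h := LatSpan.smul (-1 : ℝ) ((LatSpan.smul (-1 : ℝ) hf).sup (LatSpan.smul (-1 : ℝ) hg))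
  convert h using 1
  funext t
  simp only [Pi.inf_apply, Pi.smul_apply, Pi.sup_apply, smul_eq_mul, neg_one_mul,
    max_neg_neg, neg_neg]

lemma inHn_norm : InHn (fun t : Fin n → ℝ => ‖t‖) :=
  ⟨continuous_norm, fun l hl t => by
    show ‖l • t‖ = l * ‖t‖
    rw [norm_smul, Real.norm_of_nonneg hl]⟩

end InHnLemmas

section KrivineLemmas

variable {X : Type*} [NormedAddCommGroup X] [Lattice X] [IsOrderedAddMonoid X]
  [HasSolidNorm X] [NormedSpace ℝ X]
  {n : ℕ} {x : Fin n → X} {τ : ((Fin n → ℝ) → ℝ) → X}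

lemma IsKrivine.mono (hτ : IsKrivine x τ) {p q : (Fin n → ℝ) → ℝ}
    (hp : InHn p) (hq : InHn q) (hpq : p ≤ q) : τ p ≤ τ q := by
  have h2 : τ q = τ p ⊔ τ q := by
    calc τ q = τ (p ⊔ q) := by rw [sup_eq_right.mpr hpq]
    _ = τ p ⊔ τ q := hτ.2.2.1 p q hp hq
  rw [h2]; exact le_sup_left

lemma IsKrivine.abs_sub_le (hτ : IsKrivine x τ) {h g : (Fin n → ℝ) → ℝ}
    (hh : InHn h) (hg : InHn g) {ε : ℝ}
    (hb : ∀ t, |h t - g t| ≤ ε * ‖t‖) :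
    |τ h - τ g| ≤ ε • τ (fun t => ‖t‖) := by
  set N : (Fin n → ℝ) → ℝ := fun t => ‖t‖ with hNdef
  have hN : InHn N := inHn_norm
  set u : (Fin n → ℝ) → ℝ := h + (-1 : ℝ) • g with hu_def
  have hu : InHn u := hh.add (hg.smul _)
  have e1 : τ h - τ g = τ u := by
    have e0 : g + u = h := by
      funext t
      simp only [hu_def, Pi.add_apply, Pi.smul_apply, smul_eq_mul]
      ring
    have := hτ.1 g u hg hu
    rw [e0] at this
    rw [this]; abel
  have hle1 : u ≤ ε • N := by
    intro t
    have := abs_le.mp (hb t)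
    simp only [hu_def, Pi.add_apply, Pi.smul_apply, smul_eq_mul, hNdef]
    linarith [this.2]
  have hle2 : (-1 : ℝ) • u ≤ ε • N := by
    intro t
    have := abs_le.mp (hb t)
    simp only [hu_def, Pi.add_apply, Pi.smul_apply, smul_eq_mul, hNdef]
    linarith [this.1]
  have hεN : InHn (ε • N) := hN.smul ε
  have b1 : τ u ≤ ε • τ N := by
    have := hτ.mono hu hεN hle1
    rwa [hτ.2.1 ε N hN] at this
  have b2 : -(τ u) ≤ ε • τ N := by
    have := hτ.mono (hu.smul (-1)) hεN hle2
    rwa [hτ.2.1 ε N hN, hτ.2.1 (-1) u hu, neg_one_smul] at this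
  rw [e1]; show τ u ⊔ -τ u ≤ _
  exact sup_le b1 b2

end KrivineLemmas

section Approx

variable {n : ℕ}

/-- Lattice Stone–Weierstrass approximation on the unit sphere, extended by
homogeneity. -/
lemma latSpan_approx (hn : 0 < n) {h : (Fin n → ℝ) → ℝ} (hh : InHn h)
    {ε : ℝ} (hε : 0 < ε) :
    ∃ g, LatSpan n g ∧ ∀ t, |h t - g t| ≤ ε * ‖t‖ := by
  classical
  set K := Metric.sphere (0 : Fin n → ℝ) 1 with hK
  haveI : CompactSpace K := isCompact_iff_compactSpace.mp (isCompact_sphere 0 1)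
  -- the set of restrictions of LatSpan functions to the sphere
  set L : Set C(K, ℝ) := {F | ∃ g, LatSpan n g ∧ ∀ u : K, F u = g u.1} with hL
  have mem_mk : ∀ (g : (Fin n → ℝ) → ℝ) (hg : LatSpan n g),
      (⟨fun u : K => g u.1, (latSpan_inHn hg).1.comp continuous_subtype_val⟩ : C(K, ℝ)) ∈ L :=
    fun g hg => ⟨g, hg, fun _ => rfl⟩
  have j0 : Fin n := ⟨0, hn⟩
  have nL : L.Nonempty :=
    ⟨_, mem_mk (fun t => t j0) (LatSpan.proj j0)⟩
  have inf_mem : ∀ F ∈ L, ∀ G ∈ L, F ⊓ G ∈ L := by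
    rintro F ⟨f, hf, hFf⟩ G ⟨g, hg, hGg⟩
    exact ⟨f ⊓ g, latSpan_inf hf hg, fun u => by
      simp [ContinuousMap.inf_apply, hFf u, hGg u]⟩
  have sup_mem : ∀ F ∈ L, ∀ G ∈ L, F ⊔ G ∈ L := by
    rintro F ⟨f, hf, hFf⟩ G ⟨g, hg, hGg⟩
    exact ⟨f ⊔ g, hf.sup hg, fun u => by
      simp [ContinuousMap.sup_apply, hFf u, hGg u]⟩
  have sep : L.SeparatesPointsStrongly := by
    intro v s t
    set α := v s with hα
    set β := v t with hβ
    have hs : ‖s.1‖ = 1 := by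
      have := s.2; rwa [mem_sphere_zero_iff_norm] at this
    have ht : ‖t.1‖ = 1 := by
      have := t.2; rwa [mem_sphere_zero_iff_norm] at this
    by_cases hdep : ∃ j k, s.1 j * t.1 k ≠ s.1 k * t.1 j
    · -- independent case: a plain linear functional works
      obtain ⟨j, k, hjk⟩ := hdep
      set D : ℝ := s.1 j * t.1 k - s.1 k * t.1 j with hD
      have hD0 : D ≠ 0 := sub_ne_zero.mpr hjk
      set a : ℝ := (α * t.1 k - β * s.1 k) / D with ha
      set b : ℝ := (β * s.1 j - α * t.1 j) / D with hb
      have hg : LatSpan n (a • (fun t : Fin n → ℝ => t j) + b • (fun t : Fin n → ℝ => t k)) :=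
        (LatSpan.smul a (LatSpan.proj j)).add (LatSpan.smul b (LatSpan.proj k))
      refine ⟨_, mem_mk _ hg, ?_, ?_⟩
      · show a * s.1 j + b * s.1 k = α
        rw [ha, hb]; field_simp; ring
      · show a * t.1 j + b * t.1 k = β
        rw [ha, hb]; field_simp; ring
    · -- dependent case: t = ± s
      push_neg at hdep
      have hs0 : s.1 ≠ 0 := fun h0 => by simp [h0] at hs
      obtain ⟨j, hj⟩ : ∃ j, s.1 j ≠ 0 := by
        by_contra hc; push_neg at hc; exact hs0 (funext hc)
      have hts : t.1 = (t.1 j / s.1 j) • s.1 := by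
        funext k
        have := hdep j k
        rw [Pi.smul_apply, smul_eq_mul, div_mul_eq_mul_div, eq_div_iff hj]
        linarith [this]
      have habs : |t.1 j / s.1 j| = 1 := by
        have := congrArg norm hts
        rw [norm_smul, hs, ht, Real.norm_eq_abs] at this
        simpa using this.symm
      rcases abs_eq (zero_le_one (α := ℝ)) |>.mp habs with hc | hc
      · -- t = s
        have hst : s = t := by
          apply Subtype.ext
          rw [hts, hc, one_smul]
        subst hst
        set g : (Fin n → ℝ) → ℝ := (α / s.1 j) • (fun t : Fin n → ℝ => t j) with hgdef
        have hg : LatSpan n g := LatSpan.smul _ (LatSpan.proj j)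
        refine ⟨_, mem_mk g hg, ?_, ?_⟩ <;>
        · show α / s.1 j * s.1 j = _
          exact (div_mul_cancel₀ _ hj).trans rfl
      · -- t = -s
        have htns : t.1 = -s.1 := by rw [hts, hc]; funext k; simp
        set φ : (Fin n → ℝ) → ℝ := (1 / s.1 j) • (fun t : Fin n → ℝ => t j) with hφdef
        set z : (Fin n → ℝ) → ℝ := (0 : ℝ) • (fun t : Fin n → ℝ => t j) with hzdef
        set g : (Fin n → ℝ) → ℝ := α • (φ ⊔ z) + β • (((-1 : ℝ) • φ) ⊔ z) with hgdef
        have hφs : LatSpan n φ := LatSpan.smul _ (LatSpan.proj j)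
        have hzs : LatSpan n z := LatSpan.smul _ (LatSpan.proj j)
        have hg : LatSpan n g :=
          (LatSpan.smul α (hφs.sup hzs)).add (LatSpan.smul β ((LatSpan.smul _ hφs).sup hzs))
        have hφv : φ s.1 = 1 := by simp [hφdef]; field_simp
        have hφw : φ t.1 = -1 := by
          rw [htns]; simp only [hφdef, Pi.smul_apply, smul_eq_mul, Pi.neg_apply]
          field_simp
        refine ⟨_, mem_mk g hg, ?_, ?_⟩
        · show g s.1 = α
          have e1 : φ s.1 ⊔ (0:ℝ) * s.1 j = 1 := by
            rw [hφv, zero_mul]; exact sup_eq_left.mpr zero_le_one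
          have e2 : (-1 : ℝ) * φ s.1 ⊔ (0:ℝ) * s.1 j = 0 := by
            rw [hφv, zero_mul, mul_one]; exact sup_eq_right.mpr (by norm_num)
          simp only [hgdef, Pi.add_apply, Pi.smul_apply, Pi.sup_apply, smul_eq_mul, hzdef]
          rw [e1, e2]; ring
        · show g t.1 = β
          have e1 : φ t.1 ⊔ (0:ℝ) * t.1 j = 0 := by
            rw [hφw, zero_mul]; exact sup_eq_right.mpr (by norm_num)
          have e2 : (-1 : ℝ) * φ t.1 ⊔ (0:ℝ) * t.1 j = 1 := by
            rw [hφw, zero_mul, show (-1:ℝ) * -1 = 1 by ring]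
            exact sup_eq_left.mpr zero_le_one
          simp only [hgdef, Pi.add_apply, Pi.smul_apply, Pi.sup_apply, smul_eq_mul, hzdef]
          rw [e1, e2]; ring
  have hcl : closure L = ⊤ := ContinuousMap.sublattice_closure_eq_top L nL inf_mem sup_mem sep
  -- restrict h to the sphere and approximate
  set H : C(K, ℝ) := ⟨fun u : K => h u.1, hh.1.comp continuous_subtype_val⟩ with hH
  have hHmem : H ∈ closure L := by rw [hcl]; trivial
  obtain ⟨G, hGL, hdist⟩ := Metric.mem_closure_iff.mp hHmem ε hε
  obtain ⟨g, hg, hGg⟩ := hGL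
  refine ⟨g, hg, fun t => ?_⟩
  rcases eq_or_ne t 0 with rfl | ht0
  · rw [hh.zero_apply, (latSpan_inHn hg).zero_apply]
    simp
  · have htpos : (0 : ℝ) < ‖t‖ := norm_pos_iff.mpr ht0
    set u : Fin n → ℝ := ‖t‖⁻¹ • t with hu
    have hun : ‖u‖ = 1 := by
      rw [hu, norm_smul, norm_inv, norm_norm, inv_mul_cancel₀ htpos.ne']
    have htu : t = ‖t‖ • u := by
      rw [hu, smul_smul, mul_inv_cancel₀ htpos.ne', one_smul]
    have hut : h t = ‖t‖ * h u := by
      have := hh.2 ‖t‖ (norm_nonneg t) u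
      rwa [← htu] at this
    have hgt : g t = ‖t‖ * g u := by
      have := (latSpan_inHn hg).2 ‖t‖ (norm_nonneg t) u
      rwa [← htu] at this
    have huK : u ∈ K := by rwa [hK, mem_sphere_zero_iff_norm]
    have hpt : |h u - g u| < ε := by
      have := ContinuousMap.dist_apply_le_dist (f := H) (g := G) (⟨u, huK⟩ : K)
      have h2 : dist (H ⟨u, huK⟩) (G ⟨u, huK⟩) < ε := lt_of_le_of_lt this hdist
      rw [hH] at h2
      simp only [ContinuousMap.coe_mk] at h2
      rw [hGg ⟨u, huK⟩] at h2
      rwa [Real.dist_eq] at h2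
    rw [hut, hgt, ← mul_sub, abs_mul, abs_of_pos htpos, mul_comm ε ‖t‖]
    exact mul_le_mul_of_nonneg_left hpt.le (norm_nonneg t)

end Approx

section Comp

variable {X W : Type*} [NormedAddCommGroup X] [Lattice X] [IsOrderedAddMonoid X]
  [HasSolidNorm X] [NormedSpace ℝ X] [NormedAddCommGroup W] [Lattice W] [IsOrderedAddMonoid W]
  [HasSolidNorm W] [NormedSpace ℝ W]

lemma comp_latSpan (T : X →ₗ[ℝ] W) (hT : ∀ a b : X, T (a ⊔ b) = T a ⊔ T b)
    {n : ℕ} {x : Fin n → X}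
    {τ : ((Fin n → ℝ) → ℝ) → X} (hτ : IsKrivine x τ)
    {τ' : ((Fin n → ℝ) → ℝ) → W} (hτ' : IsKrivine (fun j => T (x j)) τ')
    {f : (Fin n → ℝ) → ℝ} (hf : LatSpan n f) : T (τ f) = τ' f := by
  induction hf with
  | proj j => rw [hτ.2.2.2 j, hτ'.2.2.2 j]
  | add hf hg ihf ihg =>
      rw [hτ.1 _ _ (latSpan_inHn hf) (latSpan_inHn hg), map_add, ihf, ihg,
        hτ'.1 _ _ (latSpan_inHn hf) (latSpan_inHn hg)]
  | smul c hf ih =>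
      rw [hτ.2.1 c _ (latSpan_inHn hf), map_smul, ih, hτ'.2.1 c _ (latSpan_inHn hf)]
  | sup hf hg ihf ihg =>
      rw [hτ.2.2.1 _ _ (latSpan_inHn hf) (latSpan_inHn hg), hT, ihf, ihg,
        hτ'.2.2.1 _ _ (latSpan_inHn hf) (latSpan_inHn hg)]

lemma latticeHom_mono (T : X →ₗ[ℝ] W) (hT : ∀ a b : X, T (a ⊔ b) = T a ⊔ T b)
    {a b : X} (hab : a ≤ b) : T a ≤ T b := by
  have : T b = T a ⊔ T b := by rw [← hT, sup_eq_right.mpr hab]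
  rw [this]; exact le_sup_left

lemma latticeHom_abs (T : X →ₗ[ℝ] W) (hT : ∀ a b : X, T (a ⊔ b) = T a ⊔ T b)
    (a : X) : T |a| = |T a| := by
  show T (a ⊔ -a) = T a ⊔ -(T a); rw [hT, map_neg]

end Comp

/-- If `T : X → W` is linear and preserves finite suprema, then
`T ∘ τ_{(x₁,...,xₙ)} = τ_{(Tx₁,...,Txₙ)}` on `H_n`. -/
theorem krivine_comp_latticeHom {X W : Type*} [NormedAddCommGroup X] [Lattice X]
    [IsOrderedAddMonoid X] [HasSolidNorm X]
    [NormedSpace ℝ X] [NormedAddCommGroup W] [Lattice W] [IsOrderedAddMonoid W]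
    [HasSolidNorm W] [NormedSpace ℝ W]
    (T : X →ₗ[ℝ] W) (hT : ∀ a b : X, T (a ⊔ b) = T a ⊔ T b)
    {n : ℕ} (x : Fin n → X)
    (τ : ((Fin n → ℝ) → ℝ) → X) (hτ : IsKrivine x τ)
    (τ' : ((Fin n → ℝ) → ℝ) → W) (hτ' : IsKrivine (fun j => T (x j)) τ')
    (h : (Fin n → ℝ) → ℝ) (hh : InHn h) :
    T (τ h) = τ' h := by
  rcases Nat.eq_zero_or_pos n with rfl | hn
  · -- n = 0 : h is forced to be `0 • h`
    have h0 : (0 : ℝ) • h = h := by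
      funext t
      have htz : t = 0 := Subsingleton.elim t 0
      rw [htz, hh.zero_apply]
      simp
    have e1 : τ h = 0 := by
      rw [← h0, hτ.2.1 0 h hh, zero_smul]
    have e2 : τ' h = 0 := by
      rw [← h0, hτ'.2.1 0 h hh, zero_smul]
    rw [e1, e2, map_zero]
  · set N : (Fin n → ℝ) → ℝ := fun t => ‖t‖ with hNdef
    set C : ℝ := ‖T (τ N)‖ + ‖τ' N‖ with hC
    have hC0 : 0 ≤ C := add_nonneg (norm_nonneg _) (norm_nonneg _)
    have key : ∀ ε : ℝ, 0 < ε → ‖T (τ h) - τ' h‖ ≤ ε * C := by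
      intro ε hε
      obtain ⟨g, hg, hb⟩ := latSpan_approx hn hh hε
      have hgH : InHn g := latSpan_inHn hg
      have hcomp : T (τ g) = τ' g := comp_latSpan T hT hτ hτ' hg
      have b1 : |τ h - τ g| ≤ ε • τ N := hτ.abs_sub_le hh hgH hb
      have b2 : |τ' h - τ' g| ≤ ε • τ' N := hτ'.abs_sub_le hh hgH hb
      have n1 : ‖T (τ h) - T (τ g)‖ ≤ ε * ‖T (τ N)‖ := by
        have habs : |T (τ h) - T (τ g)| ≤ ε • T (τ N) := by
          rw [← map_sub, ← latticeHom_abs T hT]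
          calc T |τ h - τ g| ≤ T (ε • τ N) := latticeHom_mono T hT b1
          _ = ε • T (τ N) := map_smul T ε (τ N)
        have hpos : (0 : W) ≤ ε • T (τ N) := le_trans (abs_nonneg _) habs
        have := norm_le_norm_of_abs_le_abs (by rwa [abs_of_nonneg hpos] : |T (τ h) - T (τ g)| ≤ |ε • T (τ N)|)
        rwa [norm_smul, Real.norm_of_nonneg hε.le] at this
      have n2 : ‖τ' h - τ' g‖ ≤ ε * ‖τ' N‖ := by
        have hpos : (0 : W) ≤ ε • τ' N := le_trans (abs_nonneg _) b2
        have := norm_le_norm_of_abs_le_abs (by rwa [abs_of_nonneg hpos] : |τ' h - τ' g| ≤ |ε • τ' N|)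
        rwa [norm_smul, Real.norm_of_nonneg hε.le] at this
      calc ‖T (τ h) - τ' h‖ = ‖(T (τ h) - T (τ g)) + (τ' g - τ' h)‖ := by
            rw [hcomp]; congr 1; abel
      _ ≤ ‖T (τ h) - T (τ g)‖ + ‖τ' g - τ' h‖ := norm_add_le _ _
      _ = ‖T (τ h) - T (τ g)‖ + ‖τ' h - τ' g‖ := by rw [norm_sub_rev (τ' g) (τ' h)]
      _ ≤ ε * ‖T (τ N)‖ + ε * ‖τ' N‖ := add_le_add n1 n2
      _ = ε * C := by rw [hC]; ring
    have hzero : ‖T (τ h) - τ' h‖ = 0 := by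
      by_contra hne
      have hpos : 0 < ‖T (τ h) - τ' h‖ := lt_of_le_of_ne (norm_nonneg _) (Ne.symm hne)
      set d := ‖T (τ h) - τ' h‖
      have := key (d / (2 * (C + 1))) (by positivity)
      have h2 : (0:ℝ) < 2 * (C + 1) := by linarith
      rw [div_mul_eq_mul_div, le_div_iff₀ h2] at this
      nlinarith [mul_nonneg hpos.le hC0]
    exact sub_eq_zero.mp (norm_eq_zero.mp hzero)
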